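/- arXiv:2307.00704 — 2 statements merged into one kernel-verified Lean document; each statement's English description precedes it below -/
import Mathlib

section
/- Let T be a tree with nonnegative vertex weights of total weight W, rooted at a weighted centroid c (so every subtree hanging off c has weight at most W/2), with a cyclic order on the children of c. Then the subtrees hanging off c can be partitioned into at most 3 groups, each consisting of children consecutive in the cyclic order (together with their descendants), such that each group has total weight at most W/2. -/
/-- **Grouping the subtrees of a centroid into three cyclically consecutive groups.**
Abstracting the children of a weighted centroid `c` of a tree of total weight `W`:
the `d` subtrees hanging off `c` have weights `s 0, …, s (d-1)` (listed in the cyclic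
order of the children around `c`), each nonnegative and at most `W / 2`, and together
with the weight `wc ≥ 0` of `c` they sum to `W`.  Then the index set `Fin d` can be
partitioned into at most `3` groups, each a cyclically consecutive arc, such that
each group has total weight at most `W / 2`. -/
theorem centroid_three_consecutive_groups
    (d : ℕ) (hd : 0 < d) (W wc : ℝ) (s : Fin d → ℝ)
    (hs : ∀ i, 0 ≤ s i) (hwc : 0 ≤ wc)
    (hhalf : ∀ i, s i ≤ W / 2)
    (hsum : wc + ∑ i, s i = W) :
    ∃ S : Fin 3 → Finset (Fin d),
      (∀ g h : Fin 3, g ≠ h → Disjoint (S g) (S h)) ∧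
      (∀ i : Fin d, ∃ g, i ∈ S g) ∧
      (∀ g : Fin 3, ∃ (a l : ℕ),
        S g = (Finset.range l).image
          (fun j => (⟨(a + j) % d, Nat.mod_lt _ hd⟩ : Fin d))) ∧
      (∀ g : Fin 3, ∑ i ∈ S g, s i ≤ W / 2) := by
  classical
  set s' : ℕ → ℝ := fun i => if h : i < d then s ⟨i, h⟩ else 0 with hs'def
  set P : ℕ → ℝ := fun k => ∑ j ∈ Finset.range k, s' j with hPdef
  have hSnn : (0:ℝ) ≤ ∑ i, s i := Finset.sum_nonneg fun i _ => hs i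
  have hW0 : 0 ≤ W := by linarith
  have htot : P d = W - wc := by
    have h1 : ∑ i : Fin d, s' i = ∑ j ∈ Finset.range d, s' j :=
      Fin.sum_univ_eq_sum_range s' d
    have h2 : ∀ i : Fin d, s' i.1 = s i := by
      intro i; simp [hs'def, i.isLt]
    have h3 : (∑ i : Fin d, s' i.1) = ∑ i, s i := Finset.sum_congr rfl fun i _ => h2 i
    simp only [hPdef]
    rw [← h1]
    linarith [h3]
  have haP0 : P 0 ≤ W / 2 := by simp [hPdef]; linarith
  have ha_le : Nat.findGreatest (fun k => P k ≤ W / 2) d ≤ d :=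
    Nat.findGreatest_le d
  have haP : P (Nat.findGreatest (fun k => P k ≤ W / 2) d) ≤ W / 2 :=
    Nat.findGreatest_spec (P := fun k => P k ≤ W / 2) (Nat.zero_le d) haP0
  set a : ℕ := Nat.findGreatest (fun k => P k ≤ W / 2) d with hadef
  set l1 : ℕ := min 1 (d - a) with hl1def
  set l2 : ℕ := d - a - l1 with hl2def
  set arc : ℕ → ℕ → Finset (Fin d) := fun st len => (Finset.range len).image
      (fun j => (⟨(st + j) % d, Nat.mod_lt _ hd⟩ : Fin d)) with harcdef
  have hmemarc : ∀ st len : ℕ, st + len ≤ d → ∀ i : Fin d,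
      (i ∈ arc st len ↔ st ≤ i.1 ∧ i.1 < st + len) := by
    intro st len hle i
    simp only [harcdef, Finset.mem_image, Finset.mem_range]
    constructor
    · rintro ⟨j, hj, rfl⟩
      have hlt : st + j < d := by omega
      simp only [Nat.mod_eq_of_lt hlt]
      omega
    · rintro ⟨h1, h2⟩
      refine ⟨i.1 - st, by omega, ?_⟩
      have he : st + (i.1 - st) = i.1 := by omega
      rw [he]
      ext
      exact Nat.mod_eq_of_lt i.isLt
  have hdisj : ∀ u p v q : ℕ, u + p ≤ d → v + q ≤ d → (u + p ≤ v ∨ v + q ≤ u) →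
      Disjoint (arc u p) (arc v q) := by
    intro u p v q hu hv hor
    rw [Finset.disjoint_left]
    intro i h1 h2
    rw [hmemarc u p hu i] at h1
    rw [hmemarc v q hv i] at h2
    omega
  have hsumarc : ∀ st len : ℕ, st + len ≤ d →
      ∑ i ∈ arc st len, s i = ∑ j ∈ Finset.range len, s' (st + j) := by
    intro st len hle
    simp only [harcdef]
    rw [Finset.sum_image]
    · apply Finset.sum_congr rfl
      intro j hj
      simp only [Finset.mem_range] at hj
      have hlt : st + j < d := by omega
      have he : (⟨(st + j) % d, Nat.mod_lt _ hd⟩ : Fin d) = ⟨st + j, hlt⟩ := by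
        ext; exact Nat.mod_eq_of_lt hlt
      rw [he]
      simp [hs'def, hlt]
    · intro x hx y hy hxy
      simp only [Finset.mem_coe, Finset.mem_range] at hx hy
      have hx' : st + x < d := by omega
      have hy' : st + y < d := by omega
      have := congrArg Fin.val hxy
      simp only [Nat.mod_eq_of_lt hx', Nat.mod_eq_of_lt hy'] at this
      omega
  have hb0 : 0 + a ≤ d := by omega
  have hb1 : a + l1 ≤ d := by omega
  have hb2 : (a + l1) + l2 ≤ d := by omega
  have hdeq : a + l1 + l2 = d := by omega
  refine ⟨![arc 0 a, arc a l1, arc (a + l1) l2], ?_, ?_, ?_, ?_⟩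
  · intro g h hgh
    fin_cases g <;> fin_cases h <;>
      simp only [Matrix.cons_val_zero, Matrix.cons_val_one, Matrix.head_cons,
        Matrix.cons_val_two, Matrix.tail_cons] <;>
      first
        | exact absurd rfl hgh
        | exact hdisj _ _ _ _ (by omega) (by omega) (by omega)
  · intro i
    have hi := i.isLt
    by_cases h0 : i.1 < a
    · exact ⟨0, by
        simp only [Matrix.cons_val_zero]
        exact (hmemarc 0 a hb0 i).2 ⟨by omega, by omega⟩⟩
    · by_cases h1 : i.1 < a + l1
      · exact ⟨1, by
          simp only [Matrix.cons_val_one, Matrix.head_cons]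
          exact (hmemarc a l1 hb1 i).2 ⟨by omega, by omega⟩⟩
      · exact ⟨2, by
          simp only [Matrix.cons_val_two, Matrix.tail_cons, Matrix.head_cons]
          exact (hmemarc (a + l1) l2 hb2 i).2 ⟨by omega, by omega⟩⟩
  · intro g
    fin_cases g
    · exact ⟨0, a, rfl⟩
    · exact ⟨a, l1, rfl⟩
    · exact ⟨a + l1, l2, rfl⟩
  · intro g
    fin_cases g
    · -- group 0
      show ∑ i ∈ arc 0 a, s i ≤ W / 2
      rw [hsumarc 0 a hb0]
      have : ∑ j ∈ Finset.range a, s' (0 + j) = P a := by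
        simp [hPdef]
      rw [this]; exact haP
    · -- group 1
      show ∑ i ∈ arc a l1, s i ≤ W / 2
      rw [hsumarc a l1 hb1]
      rcases Nat.eq_zero_or_pos l1 with h | h
      · simp [h]; linarith
      · have hl1 : l1 = 1 := by omega
        have had : a < d := by omega
        rw [hl1, Finset.sum_range_one]
        have : s' (a + 0) = s ⟨a, had⟩ := by simp [hs'def, had]
        rw [this]
        exact hhalf _
    · -- group 2
      show ∑ i ∈ arc (a + l1) l2, s i ≤ W / 2
      rw [hsumarc (a + l1) l2 hb2]
      rcases Nat.eq_zero_or_pos l2 with h | h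
      · simp [h]; linarith
      · have hl1 : l1 = 1 := by omega
        have had : a + 1 ≤ d := by omega
        have hgt : ¬ ((fun k => P k ≤ W / 2) (a + 1)) :=
          Nat.findGreatest_is_greatest (P := fun k => P k ≤ W / 2) (n := d)
            (k := a + 1) (by omega) (by omega)
        simp only at hgt
        push_neg at hgt
        have hsplit : P (a + 1) + ∑ j ∈ Finset.range (d - (a + 1)), s' (a + 1 + j) = P d := by
          simp only [hPdef]
          rw [← Finset.sum_Ico_eq_sum_range, Finset.range_eq_Ico, Finset.range_eq_Ico]
          exact Finset.sum_Ico_consecutive _ (Nat.zero_le _) had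
        have hl2eq : l2 = d - (a + 1) := by omega
        have hstep : a + l1 = a + 1 := by omega
        rw [hl2eq, hstep]
        linarith
end

section
/- Let T: ℕ × ℕ → ℕ satisfy T(3, n) ≤ C·log n and T(k, n) ≤ C·T(⌈2k/3⌉, c·n)·log n + C·k for k ≥ 4, where C, c ≥ 2 are constants. Then T(k, n) ≤ exp(C'·(log k)·(log log n)) for some constant C' depending only on C and c, for all k ≤ n and n sufficiently large. -/
/-- `log₂(k⁴) ≤ 7 log₂ k` for `k ≥ 2`. -/
lemma aux_log_pow4_le (k : ℕ) (hk : 2 ≤ k) : Nat.log 2 (k ^ 4) ≤ 7 * Nat.log 2 k := by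
  have hk0 : k ^ 4 ≠ 0 := by positivity
  have h1 : Nat.log 2 (k ^ 4) ≤ 4 * Nat.log 2 k + 3 := by
    have hlt : k < 2 ^ (Nat.log 2 k + 1) := Nat.lt_pow_succ_log_self (by norm_num) k
    have hlt4 : k ^ 4 < 2 ^ (4 * Nat.log 2 k + 4) := by
      calc k ^ 4 < (2 ^ (Nat.log 2 k + 1)) ^ 4 := by
            exact Nat.pow_lt_pow_left hlt (by norm_num)
        _ = 2 ^ (4 * Nat.log 2 k + 4) := by rw [← pow_mul]; ring_nf
    have := Nat.log_lt_of_lt_pow hk0 hlt4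
    omega
  have h2 : 1 ≤ Nat.log 2 k := by
    have : (2:ℕ) ^ 1 ≤ k := by simpa using hk
    exact (Nat.le_log_iff_pow_le (by norm_num) (by omega)).mpr this
  omega

/-- `log₂(c·n) ≤ c + log₂ n` for `c ≥ 2`. -/
lemma aux_log_mul_le (c n : ℕ) (hc : 2 ≤ c) : Nat.log 2 (c * n) ≤ c + Nat.log 2 n := by
  rcases Nat.eq_zero_or_pos n with rfl | hn
  · simp
  have hcn : c * n ≠ 0 := by positivity
  have h1 : c < 2 ^ (Nat.log 2 c + 1) := Nat.lt_pow_succ_log_self (by norm_num) c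
  have h2 : n < 2 ^ (Nat.log 2 n + 1) := Nat.lt_pow_succ_log_self (by norm_num) n
  have hlt : c * n < 2 ^ (Nat.log 2 c + Nat.log 2 n + 2) := by
    calc c * n < 2 ^ (Nat.log 2 c + 1) * 2 ^ (Nat.log 2 n + 1) :=
          Nat.mul_lt_mul'' h1 h2
      _ = 2 ^ (Nat.log 2 c + Nat.log 2 n + 2) := by rw [← pow_add]; ring_nf
  have h3 := Nat.log_lt_of_lt_pow hcn hlt
  have h4 : Nat.log 2 c < c := Nat.log_lt_of_lt_pow (by omega) (Nat.lt_two_pow_self (n := c))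
  omega

/-- exponent drop: for `k ≥ 4`, `log₂(m⁴) + 1 ≤ log₂(k⁴)` where `m = (2k+2)/3`. -/
lemma aux_phi_step (k : ℕ) (hk : 4 ≤ k) :
    Nat.log 2 (((2 * k + 2) / 3) ^ 4) + 1 ≤ Nat.log 2 (k ^ 4) := by
  set m := (2 * k + 2) / 3 with hm
  have h6m : 6 * m ≤ 5 * k := by omega
  have hm3 : 3 ≤ m := by omega
  have hkey : m ^ 4 * 2 ≤ k ^ 4 := by
    have h1 : (6 * m) ^ 4 ≤ (5 * k) ^ 4 := Nat.pow_le_pow_left h6m 4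
    have h2 : (6 * m) ^ 4 = 1296 * m ^ 4 := by ring
    have h3 : (5 * k) ^ 4 = 625 * k ^ 4 := by ring
    have h4 : 1296 * m ^ 4 ≤ 625 * k ^ 4 := by omega
    nlinarith [Nat.zero_le (k ^ 4)]
  have hm0 : m ^ 4 ≠ 0 := by positivity
  calc Nat.log 2 (m ^ 4) + 1 = Nat.log 2 (m ^ 4 * 2) :=
        (Nat.log_mul_base (by norm_num) hm0).symm
    _ ≤ Nat.log 2 (k ^ 4) := Nat.log_mono_right hkey

/-- `(log₂ k : ℝ) ≤ 2 log k` for `k ≥ 1`. -/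
lemma aux_natlog_le (k : ℕ) (hk : 1 ≤ k) : (Nat.log 2 k : ℝ) ≤ 2 * Real.log k := by
  have hpow : (2 : ℕ) ^ Nat.log 2 k ≤ k := Nat.pow_log_le_self 2 (by omega)
  have h1 : (Nat.log 2 k : ℝ) * Real.log 2 ≤ Real.log k := by
    have := Real.log_le_log (by positivity) (by exact_mod_cast hpow : ((2:ℕ)^Nat.log 2 k : ℝ) ≤ k)
    rwa [Real.log_pow] at this
  have h2 : (0.6931471803 : ℝ) < Real.log 2 := Real.log_two_gt_d9
  nlinarith [(Nat.cast_nonneg (Nat.log 2 k) : (0:ℝ) ≤ (Nat.log 2 k : ℝ))]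

set_option maxHeartbeats 1000000 in
lemma aux_main_nat (T : ℕ → ℕ → ℕ) (C c : ℕ) (hC : 2 ≤ C) (hc : 2 ≤ c)
    (hbase : ∀ n : ℕ, T 3 n ≤ C * Nat.log 2 n)
    (hrec : ∀ k n : ℕ, 4 ≤ k →
      T k n ≤ C * T ((2 * k + 2) / 3) (c * n) * Nat.log 2 n + C * k) :
    ∀ k : ℕ, 3 ≤ k → ∀ n : ℕ,
      T k n ≤ k * (C * (c * Nat.log 2 (k ^ 4) + Nat.log 2 n + 2)) ^ (Nat.log 2 (k ^ 4)) := by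
  intro k
  induction k using Nat.strong_induction_on with
  | _ k ih =>
    intro hk3 n
    set φ := Nat.log 2 (k ^ 4) with hφ
    set L := Nat.log 2 n with hL
    set M := C * (c * φ + L + 2) with hM
    have hφ1 : 1 ≤ φ := by
      have h81 : 3 ^ 4 ≤ k ^ 4 := Nat.pow_le_pow_left hk3 4
      have h2 : (2:ℕ) ^ 1 ≤ k ^ 4 := by norm_num at h81 ⊢; omega
      exact (Nat.le_log_iff_pow_le (by norm_num) (by norm_num at h81; omega)).mpr h2
    have hM1 : 1 ≤ M := by
      have : 2 ≤ c * φ + L + 2 := by omega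
      calc 1 ≤ C * 2 := by omega
        _ ≤ M := Nat.mul_le_mul_left C this
    rcases eq_or_lt_of_le hk3 with h3 | h4
    · -- base case k = 3
      have hb := hbase n
      have hCL : C * L ≤ M := by
        have : L ≤ c * φ + L + 2 := by omega
        exact Nat.mul_le_mul_left C this
      calc T k n = T 3 n := by rw [← h3]
        _ ≤ C * L := hb
        _ ≤ M := hCL
        _ ≤ M ^ φ := Nat.le_self_pow (by omega) M
        _ ≤ k * M ^ φ := Nat.le_mul_of_pos_left _ (by omega)
    · -- inductive step, k ≥ 4
      have hk4 : 4 ≤ k := h4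
      set m := (2 * k + 2) / 3 with hmdef
      have hmlt : m < k := by omega
      have hm3 : 3 ≤ m := by omega
      have hstep : Nat.log 2 (m ^ 4) + 1 ≤ φ := aux_phi_step k hk4
      -- M' ≤ M
      have hM' : C * (c * Nat.log 2 (m ^ 4) + Nat.log 2 (c * n) + 2) ≤ M := by
        apply Nat.mul_le_mul_left
        have h1 : Nat.log 2 (c * n) ≤ c + L := aux_log_mul_le c n hc
        have h2 : c * Nat.log 2 (m ^ 4) + c ≤ c * φ := by
          calc c * Nat.log 2 (m ^ 4) + c = c * (Nat.log 2 (m ^ 4) + 1) := by ring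
            _ ≤ c * φ := Nat.mul_le_mul_left c hstep
        omega
      have ihm := ih m hmlt hm3 (c * n)
      have hTm : T m (c * n) ≤ k * M ^ (φ - 1) := by
        calc T m (c * n)
            ≤ m * (C * (c * Nat.log 2 (m ^ 4) + Nat.log 2 (c * n) + 2)) ^ (Nat.log 2 (m ^ 4)) :=
              ihm
          _ ≤ k * M ^ (Nat.log 2 (m ^ 4)) := by
              exact Nat.mul_le_mul (le_of_lt hmlt) (Nat.pow_le_pow_left hM' _)
          _ ≤ k * M ^ (φ - 1) := by
              exact Nat.mul_le_mul_left k (Nat.pow_le_pow_right (by omega) (by omega))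
      have hCL1 : C * L + C ≤ M := by
        calc C * L + C = C * (L + 1) := by ring
          _ ≤ C * (c * φ + L + 2) := Nat.mul_le_mul_left C (by omega)
      calc T k n ≤ C * T m (c * n) * L + C * k := hrec k n hk4
        _ ≤ C * (k * M ^ (φ - 1)) * L + C * k := by
            exact Nat.add_le_add_right (Nat.mul_le_mul_right L (Nat.mul_le_mul_left C hTm)) _
        _ = k * (M ^ (φ - 1) * (C * L)) + C * k := by ring
        _ ≤ k * (M ^ (φ - 1) * (C * L)) + k * (M ^ (φ - 1) * C) := by
            have hck : C * k ≤ k * (M ^ (φ - 1) * C) := by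
              calc C * k = k * (1 * C) := by ring
                _ ≤ k * (M ^ (φ - 1) * C) :=
                  Nat.mul_le_mul_left k (Nat.mul_le_mul_right C (Nat.one_le_pow _ _ (by omega)))
            exact Nat.add_le_add_left hck _
        _ = k * (M ^ (φ - 1) * (C * L + C)) := by ring
        _ ≤ k * (M ^ (φ - 1) * M) := by
            exact Nat.mul_le_mul_left k (Nat.mul_le_mul_left _ hCL1)
        _ = k * M ^ φ := by
            have hφe : φ - 1 + 1 = φ := by omega
            rw [← pow_succ, hφe]

set_option maxHeartbeats 1000000 in
/-- **Recurrence analysis for the `k`-district algorithm.** Suppose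
`T : ℕ × ℕ → ℕ` satisfies `T(3, n) ≤ C · log n` and, for `k ≥ 4`,
`T(k, n) ≤ C · T(⌈2k/3⌉, c·n) · log n + C · k`, where `C, c ≥ 2` are constants
(`⌈2k/3⌉ = (2k + 2)/3` in natural division; logarithms base 2).  Then there is a
constant `C'` (depending only on `C` and `c`) such that for all sufficiently
large `n` and all `3 ≤ k ≤ n`,
`T(k, n) ≤ exp(C' · log k · log log n)`. -/
theorem recurrence_bound
    (T : ℕ → ℕ → ℕ) (C c : ℕ) (hC : 2 ≤ C) (hc : 2 ≤ c)
    (hbase : ∀ n : ℕ, T 3 n ≤ C * Nat.log 2 n)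
    (hrec : ∀ k n : ℕ, 4 ≤ k →
      T k n ≤ C * T ((2 * k + 2) / 3) (c * n) * Nat.log 2 n + C * k) :
    ∃ (C' : ℝ) (N₀ : ℕ), 0 < C' ∧ ∀ k n : ℕ, 3 ≤ k → k ≤ n → N₀ ≤ n →
      (T k n : ℝ) ≤ Real.exp (C' * Real.log k * Real.log (Real.log n)) := by
  have main := aux_main_nat T C c hC hc hbase hrec
  -- now the real-valued conclusion
  set A : ℕ := C * (7 * c + 3) with hA
  refine ⟨14 * (Real.log (2 * A) + 1) + 1, 16, ?_, ?_⟩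
  · have h34 : (34:ℕ) ≤ A := by
      calc (34:ℕ) = 2 * 17 := by norm_num
        _ ≤ C * (7 * c + 3) := Nat.mul_le_mul hC (by omega)
    have h34' : (34:ℝ) ≤ (A:ℝ) := by exact_mod_cast h34
    have hpos : (0:ℝ) < Real.log (2 * A) := Real.log_pos (by nlinarith)
    nlinarith
  intro k n hk3 hkn hn16
  set φ := Nat.log 2 (k ^ 4) with hφ
  set L := Nat.log 2 n with hL
  have hL4 : 4 ≤ L := by
    have : (2:ℕ) ^ 4 ≤ n := by norm_num; omega
    exact (Nat.le_log_iff_pow_le (by norm_num) (by omega)).mpr this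
  have hMA : C * (c * φ + L + 2) ≤ A * L := by
    have h1 : φ ≤ 7 * Nat.log 2 k := aux_log_pow4_le k (by omega)
    have h2 : Nat.log 2 k ≤ L := Nat.log_mono_right hkn
    calc C * (c * φ + L + 2) ≤ C * (c * (7 * L) + L + 2 * L) := by
          apply Nat.mul_le_mul_left
          have : φ ≤ 7 * L := by omega
          have hc7 : c * φ ≤ c * (7 * L) := Nat.mul_le_mul_left c this
          omega
      _ = A * L := by ring
  have hnat : T k n ≤ k * (A * L) ^ φ := by
    calc T k n ≤ k * (C * (c * φ + L + 2)) ^ φ := main k hk3 n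
      _ ≤ k * (A * L) ^ φ := Nat.mul_le_mul_left k (Nat.pow_le_pow_left hMA φ)
  -- real estimates
  have hk1 : (1:ℝ) < (k:ℝ) := by exact_mod_cast (by omega : 1 < k)
  have hlogk : (0:ℝ) < Real.log k := Real.log_pos hk1
  have hn1 : (16:ℝ) ≤ (n:ℝ) := by exact_mod_cast hn16
  have hlogn : (2.77:ℝ) < Real.log n := by
    have h2 : (0.6931471803:ℝ) < Real.log 2 := Real.log_two_gt_d9
    have : Real.log 16 ≤ Real.log n := Real.log_le_log (by norm_num) hn1
    have h16 : Real.log 16 = 4 * Real.log 2 := by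
      rw [show (16:ℝ) = 2 ^ (4:ℕ) by norm_num, Real.log_pow]; push_cast; ring
    nlinarith
  have hLL1 : (1:ℝ) ≤ Real.log (Real.log n) := by
    rw [Real.le_log_iff_exp_le (by linarith)]
    have := Real.exp_one_lt_d9
    linarith
  have hA34 : (34:ℝ) ≤ (A:ℝ) := by
    have h34 : (34:ℕ) ≤ A := by
      calc (34:ℕ) = 2 * 17 := by norm_num
        _ ≤ C * (7 * c + 3) := Nat.mul_le_mul hC (by omega)
    exact_mod_cast h34
  have hALpos : (0:ℝ) < (A:ℝ) * (L:ℝ) := by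
    have : (4:ℝ) ≤ (L:ℝ) := by exact_mod_cast hL4
    nlinarith
  have hLreal : (L:ℝ) ≤ 2 * Real.log n := by
    have hpow : (2:ℕ) ^ L ≤ n := Nat.pow_log_le_self 2 (by omega)
    have h1 : (L:ℝ) * Real.log 2 ≤ Real.log n := by
      have := Real.log_le_log (by positivity)
        (by exact_mod_cast hpow : ((2:ℕ) ^ L : ℝ) ≤ (n:ℝ))
      rwa [Real.log_pow] at this
    have h2 : (0.6931471803:ℝ) < Real.log 2 := Real.log_two_gt_d9
    nlinarith [(Nat.cast_nonneg L : (0:ℝ) ≤ (L : ℝ))]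
  have hlogAL : Real.log ((A:ℝ) * L) ≤ Real.log (2 * A) + Real.log (Real.log n) := by
    have h1 : (A:ℝ) * L ≤ 2 * A * Real.log n := by nlinarith
    calc Real.log ((A:ℝ) * L) ≤ Real.log (2 * A * Real.log n) :=
          Real.log_le_log hALpos h1
      _ = Real.log (2 * A) + Real.log (Real.log n) := by
          rw [Real.log_mul (by nlinarith) (by nlinarith)]
  have hφreal : (φ:ℝ) ≤ 14 * Real.log k := by
    have h1 : φ ≤ 7 * Nat.log 2 k := aux_log_pow4_le k (by omega)
    have h2 : (Nat.log 2 k : ℝ) ≤ 2 * Real.log k := aux_natlog_le k (by omega)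
    have h3 : (φ:ℝ) ≤ 7 * (Nat.log 2 k : ℝ) := by exact_mod_cast h1
    nlinarith
  -- put it together
  have hx : (0:ℝ) < (k:ℝ) * ((A:ℝ) * L) ^ φ := by positivity
  have hlogx : Real.log ((k:ℝ) * ((A:ℝ) * L) ^ φ)
      ≤ (14 * (Real.log (2 * A) + 1) + 1) * Real.log k * Real.log (Real.log n) := by
    rw [Real.log_mul (by positivity) (by positivity), Real.log_pow]
    have hlogALnn : (0:ℝ) ≤ Real.log ((A:ℝ) * L) := by
      apply Real.log_nonneg
      have : (4:ℝ) ≤ (L:ℝ) := by exact_mod_cast hL4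
      nlinarith
    have hlog2A : (0:ℝ) < Real.log (2 * A) := Real.log_pos (by nlinarith)
    have hφnn : (0:ℝ) ≤ (φ:ℝ) := Nat.cast_nonneg φ
    have hlk : Real.log k ≤ Real.log k * Real.log (Real.log n) := by nlinarith
    have h5 : (φ:ℝ) * Real.log ((A:ℝ) * L)
        ≤ 14 * Real.log k * (Real.log (2 * A) + Real.log (Real.log n)) := by
      calc (φ:ℝ) * Real.log ((A:ℝ) * L)
          ≤ (14 * Real.log k) * Real.log ((A:ℝ) * L) := by nlinarith
        _ ≤ (14 * Real.log k) * (Real.log (2 * A) + Real.log (Real.log n)) := by nlinarith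
    nlinarith [hlogk, hLL1, hlog2A]
  calc (T k n : ℝ) ≤ (k:ℝ) * ((A:ℝ) * L) ^ φ := by
        have := hnat
        have hcast : ((k * (A * L) ^ φ : ℕ) : ℝ) = (k:ℝ) * ((A:ℝ) * L) ^ φ := by push_cast; ring
        calc (T k n : ℝ) ≤ ((k * (A * L) ^ φ : ℕ) : ℝ) := by exact_mod_cast this
          _ = _ := hcast
    _ ≤ Real.exp ((14 * (Real.log (2 * A) + 1) + 1) * Real.log k * Real.log (Real.log n)) :=
        (Real.log_le_iff_le_exp hx).mp hlogx
end
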